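/- Consider an MDP satisfying the time-invariance, random exploration, and stationarity assumptions, and suppose geometric mixing holds with parameter t_0 for the state kernels of both the behavior and evaluation policies, and policy overlap holds with parameter C_η = exp(ζ_π), i.e., π_e(a|s) ≤ e^{ζ_π} π_b(a|s) for all s,a. Then long-run δ-weak distributional overlap holds with δ = 1/(ζ_π t_0): there exists a finite constant C such that P_{p_b}(ω(S)^{1 + 1/(ζ_π t_0)} ≥ x) ≤ C/x for all x > 0, where ω = d p_e/d p_b is the ratio of the stationary state distributions of the evaluation and behavior policies. -/

import Mathlib

/- Off-policy evaluation in Markov decision processes: common definitions.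

We model a time-invariant MDP by a measurable state space `𝒮`, a finite action set `𝒜`,
a Markov transition kernel `ps : 𝒮 → 𝒜 → Measure 𝒮` and a reward kernel
`pr : 𝒮 → 𝒜 → Measure ℝ`.  A policy is given by probability weights `π : 𝒮 → 𝒜 → ℝ`. -/

open MeasureTheory ProbabilityTheory Filter Topology
open scoped ENNReal NNReal

noncomputable section

variable {𝒮 : Type*} [MeasurableSpace 𝒮] {𝒜 : Type*} [Fintype 𝒜] [MeasurableSpace 𝒜]
  {Ω : Type*}

/-- Action distribution of a (weight-valued) policy `π` in state `s`. -/
def actDist (π : 𝒮 → 𝒜 → ℝ) (s : 𝒮) : Measure 𝒜 :=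
  ∑ a : 𝒜, ENNReal.ofReal (π s a) • Measure.dirac a

/-- One-step state transition kernel induced by a policy:
`P^π(· | s) = ∑ a π(a|s) p_s(· | s, a)`. -/
def stepS (ps : 𝒮 → 𝒜 → Measure 𝒮) (π : 𝒮 → 𝒜 → ℝ) (s : 𝒮) : Measure 𝒮 :=
  ∑ a : 𝒜, ENNReal.ofReal (π s a) • ps s a

/-- One-step state-action transition kernel induced by a policy. -/
def stepSA (ps : 𝒮 → 𝒜 → Measure 𝒮) (π : 𝒮 → 𝒜 → ℝ) (p : 𝒮 × 𝒜) : Measure (𝒮 × 𝒜) :=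
  (ps p.1 p.2).bind fun s' => (actDist π s').map fun a' => (s', a')

/-- `n`-step evolution of a distribution under a transition kernel. -/
def nstep {X : Type*} [MeasurableSpace X] (step : X → Measure X) (n : ℕ) (μ0 : Measure X) :
    Measure X :=
  (fun ν => ν.bind step)^[n] μ0

/-- Mean reward `r̄(s,a) = E[p_r(·|s,a)]`. -/
def rbar (pr : 𝒮 → 𝒜 → Measure ℝ) (p : 𝒮 × 𝒜) : ℝ := ∫ r, r ∂(pr p.1 p.2)

/-- Initial joint state-action distribution: `S ∼ p₀`, `A ∼ π(·|S)`. -/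
def initSA (π : 𝒮 → 𝒜 → ℝ) (p0 : Measure 𝒮) : Measure (𝒮 × 𝒜) :=
  p0.bind fun s => (actDist π s).map fun a => (s, a)

/-- Discounted `Q`-function `q_e^γ(s,a) = E_{π_e}[∑ γ^t R_t | S₀ = s, A₀ = a]`
(expressed via the `t`-step state-action distributions, using that the mean reward at time `t`
is the integral of `r̄` against the time-`t` state-action distribution). -/
def qGamma (ps : 𝒮 → 𝒜 → Measure 𝒮) (pr : 𝒮 → 𝒜 → Measure ℝ) (πe : 𝒮 → 𝒜 → ℝ) (γ : ℝ)
    (s : 𝒮) (a : 𝒜) : ℝ :=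
  ∑' t : ℕ, γ ^ t * ∫ p, rbar pr p ∂(nstep (stepSA ps πe) t (Measure.dirac (s, a)))

/-- Discounted value function `v_e^γ(s) = ∑ a π_e(a|s) q_e^γ(s,a)`. -/
def vGamma (ps : 𝒮 → 𝒜 → Measure 𝒮) (pr : 𝒮 → 𝒜 → Measure ℝ) (πe : 𝒮 → 𝒜 → ℝ) (γ : ℝ)
    (s : 𝒮) : ℝ :=
  ∑ a : 𝒜, πe s a * qGamma ps pr πe γ s a

/-- Discounted average reward `θ_γ(p₀) = (1-γ) E_{π_e}[∑ γ^t R_t | S₀ ∼ p₀]`. -/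
def thetaGammaVal (ps : 𝒮 → 𝒜 → Measure 𝒮) (pr : 𝒮 → 𝒜 → Measure ℝ) (πe : 𝒮 → 𝒜 → ℝ)
    (γ : ℝ) (p0 : Measure 𝒮) : ℝ :=
  (1 - γ) * ∑' t : ℕ, γ ^ t * ∫ p, rbar pr p ∂(nstep (stepSA ps πe) t (initSA πe p0))

/-- Discounted state occupancy `p_e^γ(·; p₀) = (1-γ) ∑ γ^t P_{π_e}(S_t ∈ · | S₀ ∼ p₀)`. -/
def peGamma (ps : 𝒮 → 𝒜 → Measure 𝒮) (πe : 𝒮 → 𝒜 → ℝ) (γ : ℝ) (p0 : Measure 𝒮) :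
    Measure 𝒮 :=
  ENNReal.ofReal (1 - γ) •
    Measure.sum fun t : ℕ => ENNReal.ofReal (γ ^ t) • nstep (stepS ps πe) t p0

/-- Law of a stationary behavior-policy triple `(S, A, S')`:
`S ∼ p_b`, `A ∼ π_b(·|S)`, `S' ∼ p_s(·|S,A)`. -/
def behTriple (ps : 𝒮 → 𝒜 → Measure 𝒮) (πb : 𝒮 → 𝒜 → ℝ) (pb : Measure 𝒮) :
    Measure (𝒮 × 𝒜 × 𝒮) :=
  pb.bind fun s => (actDist πb s).bind fun a => (ps s a).map fun s' => (s, a, s')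

/-- Law of a stationary behavior-policy tuple `(S, A, R, S')`. -/
def behTuple (ps : 𝒮 → 𝒜 → Measure 𝒮) (pr : 𝒮 → 𝒜 → Measure ℝ) (πb : 𝒮 → 𝒜 → ℝ)
    (pb : Measure 𝒮) : Measure (𝒮 × 𝒜 × ℝ × 𝒮) :=
  pb.bind fun s => (actDist πb s).bind fun a =>
    ((pr s a).prod (ps s a)).map fun rs => (s, a, rs.1, rs.2)

/-- Total-variation distance between two measures. -/
def tvDist {X : Type*} [MeasurableSpace X] (μ ν : Measure X) : ℝ :=
  ⨆ B : {B : Set X // MeasurableSet B}, |(μ B.1).toReal - (ν B.1).toReal|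

/-- σ-algebra generated by `f 0, …, f (n-1)`. -/
def sigmaUpTo {X : Type*} [MeasurableSpace X] (f : ℕ → Ω → X) (n : ℕ) : MeasurableSpace Ω :=
  ⨆ i ∈ Finset.range n, MeasurableSpace.comap (f i) inferInstance

/-- History σ-algebra `σ(S₀,…,S_t, A₀,…,A_t, R₀,…,R_{t-1})`. -/
def histSA (S : ℕ → Ω → 𝒮) (A : ℕ → Ω → 𝒜) (Rw : ℕ → Ω → ℝ) (t : ℕ) : MeasurableSpace Ω :=
  sigmaUpTo S (t + 1) ⊔ sigmaUpTo A (t + 1) ⊔ sigmaUpTo Rw t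

/-- History σ-algebra `σ(S₀,…,S_t, A₀,…,A_t, R₀,…,R_t)`. -/
def histFull (S : ℕ → Ω → 𝒮) (A : ℕ → Ω → 𝒜) (Rw : ℕ → Ω → ℝ) (t : ℕ) : MeasurableSpace Ω :=
  sigmaUpTo S (t + 1) ⊔ sigmaUpTo A (t + 1) ⊔ sigmaUpTo Rw (t + 1)

/-- History σ-algebra `σ(S₀,…,S_t, A₀,…,A_{t-1}, R₀,…,R_{t-1})`. -/
def histPreA (S : ℕ → Ω → 𝒮) (A : ℕ → Ω → 𝒜) (Rw : ℕ → Ω → ℝ) (t : ℕ) : MeasurableSpace Ω :=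
  sigmaUpTo S (t + 1) ⊔ sigmaUpTo A t ⊔ sigmaUpTo Rw t

/-- The (untruncated) doubly robust estimator for the discounted average reward. -/
def drGamma (πb πe : 𝒮 → 𝒜 → ℝ) (γ : ℝ) (p0 : Measure 𝒮) (qh : 𝒮 → 𝒜 → ℝ) (ωh : 𝒮 → ℝ)
    (T : ℕ) (S : ℕ → Ω → 𝒮) (A : ℕ → Ω → 𝒜) (Rw : ℕ → Ω → ℝ) (ω : Ω) : ℝ :=
  (1 - γ) * (∫ s, ∑ a : 𝒜, πe s a * qh s a ∂p0) +
    (T : ℝ)⁻¹ * ∑ t ∈ Finset.range T,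
      ωh (S t ω) * (πe (S t ω) (A t ω) / πb (S t ω) (A t ω)) *
        (Rw t ω + γ * (∑ a : 𝒜, πe (S (t + 1) ω) a * qh (S (t + 1) ω) a) - qh (S t ω) (A t ω))

/-- The truncated doubly robust (TDR) estimator for the discounted average reward. -/
def tdrGamma (πb πe : 𝒮 → 𝒜 → ℝ) (γ : ℝ) (p0 : Measure 𝒮) (qh : 𝒮 → 𝒜 → ℝ) (ωh : 𝒮 → ℝ)
    (τ : ℕ → ℝ) (T : ℕ) (S : ℕ → Ω → 𝒮) (A : ℕ → Ω → 𝒜) (Rw : ℕ → Ω → ℝ) (ω : Ω) : ℝ :=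
  (1 - γ) * (∫ s, ∑ a : 𝒜, πe s a * qh s a ∂p0) +
    (T : ℝ)⁻¹ * ∑ t ∈ Finset.range T,
      min (ωh (S t ω)) (τ t) * (πe (S t ω) (A t ω) / πb (S t ω) (A t ω)) *
        (Rw t ω + γ * (∑ a : 𝒜, πe (S (t + 1) ω) a * qh (S (t + 1) ω) a) - qh (S t ω) (A t ω))

/-- The self-normalized truncated doubly robust (TDR) estimator for the long-run
average reward. -/
def tdrLong (πb πe : 𝒮 → 𝒜 → ℝ) (Qh : 𝒮 → 𝒜 → ℝ) (ωh : 𝒮 → ℝ) (τ : ℕ → ℝ) (T : ℕ)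
    (S : ℕ → Ω → 𝒮) (A : ℕ → Ω → 𝒜) (Rw : ℕ → Ω → ℝ) (ω : Ω) : ℝ :=
  (∑ t ∈ Finset.range T,
      min (ωh (S t ω)) (τ t) * (πe (S t ω) (A t ω) / πb (S t ω) (A t ω)) *
        (Rw t ω + (∑ a : 𝒜, πe (S (t + 1) ω) a * Qh (S (t + 1) ω) a) - Qh (S t ω) (A t ω))) /
    (∑ t ∈ Finset.range T,
      min (ωh (S t ω)) (τ t) * (πe (S t ω) (A t ω) / πb (S t ω) (A t ω)))

/-- The martingale summands `X_{t,T}` appearing in the CLT analysis of the TDR estimator,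
with truncation `τ_t = t^{α/2}`. -/
def Xtdr (ps : 𝒮 → 𝒜 → Measure 𝒮) (pr : 𝒮 → 𝒜 → Measure ℝ) (πb πe : 𝒮 → 𝒜 → ℝ)
    (γ α : ℝ) (ωγ : 𝒮 → ℝ) (S : ℕ → Ω → 𝒮) (A : ℕ → Ω → 𝒜) (Rw : ℕ → Ω → ℝ)
    (T t : ℕ) (ω : Ω) : ℝ :=
  (Real.sqrt T)⁻¹ * min (ωγ (S t ω)) ((t : ℝ) ^ (α / 2)) *
    (πe (S t ω) (A t ω) / πb (S t ω) (A t ω)) *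
    (Rw t ω + γ * vGamma ps pr πe γ (S (t + 1) ω) - qGamma ps pr πe γ (S t ω) (A t ω))

/-- Asymptotic variance `σ_b²` for discounted off-policy evaluation. -/
def sigmaB2 (ps : 𝒮 → 𝒜 → Measure 𝒮) (pr : 𝒮 → 𝒜 → Measure ℝ) (πb πe : 𝒮 → 𝒜 → ℝ)
    (γ : ℝ) (pb : Measure 𝒮) (ωγ : 𝒮 → ℝ) : ℝ :=
  ∫ v, (ωγ v.1 * (πe v.1 v.2.1 / πb v.1 v.2.1) *
      (v.2.2.1 + γ * vGamma ps pr πe γ v.2.2.2 - qGamma ps pr πe γ v.1 v.2.1)) ^ 2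
    ∂(behTuple ps pr πb pb)

/-- Asymptotic variance `Σ_b²` for long-run average-reward off-policy evaluation. -/
def sigmaB2Long (ps : 𝒮 → 𝒜 → Measure 𝒮) (pr : 𝒮 → 𝒜 → Measure ℝ) (πb πe : 𝒮 → 𝒜 → ℝ)
    (pb : Measure 𝒮) (ωs : 𝒮 → ℝ) (Q : 𝒮 → 𝒜 → ℝ) (θ : ℝ) : ℝ :=
  ∫ v, (ωs v.1 * (πe v.1 v.2.1 / πb v.1 v.2.1) *
      (v.2.2.1 + (∑ a : 𝒜, πe v.2.2.2 a * Q v.2.2.2 a) - Q v.1 v.2.1 - θ)) ^ 2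
    ∂(behTuple ps pr πb pb)

/-- The score `ψ(S_t, A_t, R_t, S_{t+1}; f_ω, f_q)` used in the doubly robust estimator. -/
def psiFun (πb πe : 𝒮 → 𝒜 → ℝ) (γ : ℝ) (p0 : Measure 𝒮) (fq : 𝒮 → 𝒜 → ℝ) (fω : 𝒮 → ℝ)
    (S : ℕ → Ω → 𝒮) (A : ℕ → Ω → 𝒜) (Rw : ℕ → Ω → ℝ) (t : ℕ) (ω : Ω) : ℝ :=
  (1 - γ) * (∫ s, ∑ a : 𝒜, πe s a * fq s a ∂p0) +
    fω (S t ω) * (πe (S t ω) (A t ω) / πb (S t ω) (A t ω)) *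
      (Rw t ω + γ * (∑ a : 𝒜, πe (S (t + 1) ω) a * fq (S (t + 1) ω) a) - fq (S t ω) (A t ω))

/-- Shorthand `c_t = w(S_t) η(S_t, A_t)` (density-ratio times action-probability ratio). -/
def cW (πb πe : 𝒮 → 𝒜 → ℝ) (w : 𝒮 → ℝ) (S : ℕ → Ω → 𝒮) (A : ℕ → Ω → 𝒜) (t : ℕ) (ω : Ω) : ℝ :=
  w (S t ω) * (πe (S t ω) (A t ω) / πb (S t ω) (A t ω))

/-- Shorthand `b_t = R_t + V(S_{t+1}) - Q(S_t, A_t) - θ`. -/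
def bQ (πe : 𝒮 → 𝒜 → ℝ) (Q : 𝒮 → 𝒜 → ℝ) (θ : ℝ) (S : ℕ → Ω → 𝒮) (A : ℕ → Ω → 𝒜)
    (Rw : ℕ → Ω → ℝ) (t : ℕ) (ω : Ω) : ℝ :=
  Rw t ω + (∑ a : 𝒜, πe (S (t + 1) ω) a * Q (S (t + 1) ω) a) - Q (S t ω) (A t ω) - θ




lemma stepS_apply (ps : 𝒮 → 𝒜 → Measure 𝒮) (π : 𝒮 → 𝒜 → ℝ) (s : 𝒮) (B : Set 𝒮) :
    stepS ps π s B = ∑ a : 𝒜, ENNReal.ofReal (π s a) * ps s a B := by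
  simp [stepS, Measure.finset_sum_apply, Measure.smul_apply, smul_eq_mul]

lemma measurable_stepS (ps : 𝒮 → 𝒜 → Measure 𝒮) (π : 𝒮 → 𝒜 → ℝ)
    (hps : Measurable fun p : 𝒮 × 𝒜 => ps p.1 p.2)
    (hπ : ∀ a, Measurable fun s => π s a) : Measurable (stepS ps π) := by
  apply Measure.measurable_of_measurable_coe
  intro B hB
  simp only [stepS_apply]
  refine Finset.measurable_sum _ fun a _ => Measurable.mul ?_ ?_
  · exact ENNReal.measurable_ofReal.comp (hπ a)
  · exact (Measure.measurable_coe hB).comp (hps.comp (measurable_id.prodMk measurable_const))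

lemma isProb_stepS (ps : 𝒮 → 𝒜 → Measure 𝒮) (π : 𝒮 → 𝒜 → ℝ)
    (hps : ∀ s a, IsProbabilityMeasure (ps s a))
    (hπ0 : ∀ s a, 0 ≤ π s a) (hπ1 : ∀ s, ∑ a : 𝒜, π s a = 1) (s : 𝒮) :
    IsProbabilityMeasure (stepS ps π s) := by
  constructor
  rw [stepS_apply]
  have : ∀ a : 𝒜, (ps s a) Set.univ = 1 := fun a => (hps s a).measure_univ
  simp only [this, mul_one]
  rw [← ENNReal.ofReal_sum_of_nonneg (fun a _ => hπ0 s a), hπ1 s, ENNReal.ofReal_one]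

lemma isProb_bind (μ : Measure 𝒮) (hμ : IsProbabilityMeasure μ) (k : 𝒮 → Measure 𝒮)
    (hk : Measurable k) (hkp : ∀ s, IsProbabilityMeasure (k s)) :
    IsProbabilityMeasure (μ.bind k) := by
  constructor
  rw [Measure.bind_apply MeasurableSet.univ hk.aemeasurable]
  simp only [fun s => (hkp s).measure_univ]
  simp

lemma bind_apply_le (ν μ : Measure 𝒮) (c : ℝ≥0∞) (k : 𝒮 → Measure 𝒮) (hk : Measurable k)
    (h : ∀ B : Set 𝒮, MeasurableSet B → ν B ≤ c * μ B) {B : Set 𝒮} (hB : MeasurableSet B) :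
    (ν.bind k) B ≤ c * (μ.bind k) B := by
  rw [Measure.bind_apply hB hk.aemeasurable, Measure.bind_apply hB hk.aemeasurable]
  calc ∫⁻ s, k s B ∂ν ≤ ∫⁻ s, k s B ∂(c • μ) :=
        lintegral_mono' (Measure.le_iff.mpr fun A hA => by
          simpa [Measure.smul_apply, smul_eq_mul] using h A hA) le_rfl
    _ = c * ∫⁻ s, k s B ∂μ := lintegral_smul_measure c _

lemma nstep_zero {X : Type*} [MeasurableSpace X] (step : X → Measure X) (μ0 : Measure X) :
    nstep step 0 μ0 = μ0 := rfl

lemma nstep_succ {X : Type*} [MeasurableSpace X] (step : X → Measure X) (n : ℕ) (μ0 : Measure X) :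
    nstep step (n + 1) μ0 = (nstep step n μ0).bind step :=
  Function.iterate_succ_apply' _ _ _

lemma tv_term_le_one {X : Type*} [MeasurableSpace X] (μ ν : Measure X)
    (hμ : IsProbabilityMeasure μ) (hν : IsProbabilityMeasure ν) (B : Set X) :
    |(μ B).toReal - (ν B).toReal| ≤ 1 := by
  have h1 : (μ B).toReal ≤ 1 := by
    have := prob_le_one (μ := μ) (s := B)
    simpa using ENNReal.toReal_mono ENNReal.one_ne_top this
  have h2 : (ν B).toReal ≤ 1 := by
    have := prob_le_one (μ := ν) (s := B)
    simpa using ENNReal.toReal_mono ENNReal.one_ne_top this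
  have h3 : 0 ≤ (μ B).toReal := ENNReal.toReal_nonneg
  have h4 : 0 ≤ (ν B).toReal := ENNReal.toReal_nonneg
  rw [abs_le]; constructor <;> linarith

lemma tvDist_le_one {X : Type*} [MeasurableSpace X] (μ ν : Measure X)
    (hμ : IsProbabilityMeasure μ) (hν : IsProbabilityMeasure ν) : tvDist μ ν ≤ 1 :=
  ciSup_le fun B => tv_term_le_one μ ν hμ hν B.1

lemma abs_sub_le_tvDist {X : Type*} [MeasurableSpace X] (μ ν : Measure X)
    (hμ : IsProbabilityMeasure μ) (hν : IsProbabilityMeasure ν) {B : Set X}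
    (hB : MeasurableSet B) : |(μ B).toReal - (ν B).toReal| ≤ tvDist μ ν :=
  le_ciSup (f := fun B : {B : Set X // MeasurableSet B} => |(μ B.1).toReal - (ν B.1).toReal|)
    ⟨1, by rintro r ⟨C, rfl⟩; exact tv_term_le_one μ ν hμ hν C.1⟩ ⟨B, hB⟩

lemma stepS_le_stepS (ps : 𝒮 → 𝒜 → Measure 𝒮) (πb πe : 𝒮 → 𝒜 → ℝ) (ζ : ℝ)
    (hC : ∀ s a, πe s a ≤ Real.exp ζ * πb s a) (s : 𝒮) (B : Set 𝒮) :
    stepS ps πe s B ≤ ENNReal.ofReal (Real.exp ζ) * stepS ps πb s B := by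
  rw [stepS_apply, stepS_apply, Finset.mul_sum]
  refine Finset.sum_le_sum fun a _ => ?_
  rw [← mul_assoc, ← ENNReal.ofReal_mul (Real.exp_nonneg ζ)]
  exact mul_le_mul_left (ENNReal.ofReal_le_ofReal (hC s a)) _

lemma nstep_le_exp (ps : 𝒮 → 𝒜 → Measure 𝒮) (πb πe : 𝒮 → 𝒜 → ℝ) (ζ : ℝ)
    (hC : ∀ s a, πe s a ≤ Real.exp ζ * πb s a)
    (hkE : Measurable (stepS ps πe)) (hkB : Measurable (stepS ps πb))
    (pb : Measure 𝒮) (hpbInv : pb.bind (stepS ps πb) = pb) :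
    ∀ (t : ℕ) (B : Set 𝒮), MeasurableSet B →
      nstep (stepS ps πe) t pb B ≤ (ENNReal.ofReal (Real.exp ζ)) ^ t * pb B := by
  intro t
  induction t with
  | zero => intro B _; simp [nstep_zero]
  | succ t ih =>
    intro B hB
    rw [nstep_succ]
    have h1 : ((nstep (stepS ps πe) t pb).bind (stepS ps πe)) B ≤
        ENNReal.ofReal (Real.exp ζ) * ((nstep (stepS ps πe) t pb).bind (stepS ps πb)) B := by
      rw [Measure.bind_apply hB hkE.aemeasurable, Measure.bind_apply hB hkB.aemeasurable]
      calc ∫⁻ s, stepS ps πe s B ∂(nstep (stepS ps πe) t pb)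
          ≤ ∫⁻ s, ENNReal.ofReal (Real.exp ζ) * stepS ps πb s B ∂(nstep (stepS ps πe) t pb) :=
            lintegral_mono fun s => stepS_le_stepS ps πb πe ζ hC s B
        _ = ENNReal.ofReal (Real.exp ζ) * ∫⁻ s, stepS ps πb s B ∂(nstep (stepS ps πe) t pb) :=
            lintegral_const_mul _ ((Measure.measurable_coe hB).comp hkB)
    have h2 : ((nstep (stepS ps πe) t pb).bind (stepS ps πb)) B ≤
        (ENNReal.ofReal (Real.exp ζ)) ^ t * (pb.bind (stepS ps πb)) B :=
      bind_apply_le _ _ _ _ hkB (fun A hA => by simpa [hpbInv] using ih A hA) hB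
    rw [hpbInv] at h2
    calc ((nstep (stepS ps πe) t pb).bind (stepS ps πe)) B
        ≤ ENNReal.ofReal (Real.exp ζ) * ((ENNReal.ofReal (Real.exp ζ)) ^ t * pb B) :=
          h1.trans (mul_le_mul_right h2 _)
      _ = (ENNReal.ofReal (Real.exp ζ)) ^ (t + 1) * pb B := by ring

lemma nstep_isProb {X : Type*} [MeasurableSpace X] (step : X → Measure X)
    (hm : Measurable step) (hp : ∀ s, IsProbabilityMeasure (step s)) (μ0 : Measure X)
    (hμ0 : IsProbabilityMeasure μ0) : ∀ t, IsProbabilityMeasure (nstep step t μ0) := by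
  intro t
  induction t with
  | zero => simpa [nstep_zero] using hμ0
  | succ t ih => rw [nstep_succ]; exact isProb_bind _ ih _ hm hp

lemma nstep_fixed {X : Type*} [MeasurableSpace X] (step : X → Measure X) (μ : Measure X)
    (hinv : μ.bind step = μ) : ∀ t, nstep step t μ = μ := by
  intro t
  induction t with
  | zero => rfl
  | succ t ih => rw [nstep_succ, ih, hinv]

lemma tvDist_nstep_le (ps : 𝒮 → 𝒜 → Measure 𝒮) (πe : 𝒮 → 𝒜 → ℝ) (t0 : ℝ)
    (hkE : Measurable (stepS ps πe)) (hkEp : ∀ s, IsProbabilityMeasure (stepS ps πe s))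
    (hgeo : ∀ f1 f2 : Measure 𝒮, IsProbabilityMeasure f1 → IsProbabilityMeasure f2 →
      tvDist (f1.bind (stepS ps πe)) (f2.bind (stepS ps πe)) ≤
        Real.exp (-(1 / t0)) * tvDist f1 f2)
    (pb pe : Measure 𝒮) (hpb : IsProbabilityMeasure pb) (hpe : IsProbabilityMeasure pe)
    (hpeInv : pe.bind (stepS ps πe) = pe) :
    ∀ t : ℕ, tvDist (nstep (stepS ps πe) t pb) pe ≤ Real.exp (-(1 / t0)) ^ t := by
  intro t
  induction t with
  | zero =>
    simpa [nstep_zero] using tvDist_le_one pb pe hpb hpe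
  | succ t ih =>
    have hprob := nstep_isProb _ hkE hkEp pb hpb t
    calc tvDist (nstep (stepS ps πe) (t + 1) pb) pe
        = tvDist ((nstep (stepS ps πe) t pb).bind (stepS ps πe)) (pe.bind (stepS ps πe)) := by
          rw [nstep_succ, hpeInv]
      _ ≤ Real.exp (-(1 / t0)) * tvDist (nstep (stepS ps πe) t pb) pe :=
          hgeo _ _ hprob hpe
      _ ≤ Real.exp (-(1 / t0)) * Real.exp (-(1 / t0)) ^ t := by
          exact mul_le_mul_of_nonneg_left ih (Real.exp_nonneg _)
      _ = Real.exp (-(1 / t0)) ^ (t + 1) := (pow_succ' _ _).symm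


/-- Theorem 5: mixing-implied distributional overlap. For an MDP satisfying
time-invariance, random exploration and stationarity, if geometric mixing holds with
parameter `t₀` for the state kernels of both policies and policy overlap holds with
`C_η = exp(ζ_π)`, then long-run δ-weak distributional overlap holds with `δ = 1/(ζ_π t₀)`. -/
theorem mixing_implies_weak_overlap
    {𝒮 : Type*} [MeasurableSpace 𝒮] {𝒜 : Type*} [Fintype 𝒜] [MeasurableSpace 𝒜]
    {Ω : Type*} [MeasurableSpace Ω]
    (ps : 𝒮 → 𝒜 → Measure 𝒮) (pr : 𝒮 → 𝒜 → Measure ℝ) (Rmax : ℝ)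
    (hps : ∀ s a, IsProbabilityMeasure (ps s a))
    (hpsm : Measurable fun p : 𝒮 × 𝒜 => ps p.1 p.2)
    (hpr : ∀ s a, IsProbabilityMeasure (pr s a))
    (hprm : Measurable fun p : 𝒮 × 𝒜 => pr p.1 p.2)
    (hRmax : 0 ≤ Rmax) (hRbd : ∀ s a, ∀ᵐ r ∂(pr s a), |r| ≤ Rmax)
    (πb πe : 𝒮 → 𝒜 → ℝ)
    (hπb0 : ∀ s a, 0 < πb s a) (hπb1 : ∀ s, ∑ a : 𝒜, πb s a = 1)
    (hπbm : ∀ a, Measurable fun s => πb s a)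
    (hπe0 : ∀ s a, 0 ≤ πe s a) (hπe1 : ∀ s, ∑ a : 𝒜, πe s a = 1)
    (hπem : ∀ a, Measurable fun s => πe s a)
    (ζπ : ℝ) (hζπ : 0 < ζπ) (hCη : ∀ s a, πe s a ≤ Real.exp ζπ * πb s a)
    (pb : Measure 𝒮) (hpb : IsProbabilityMeasure pb)
    (hpbInv : pb.bind (stepS ps πb) = pb)
    (μ : Measure Ω) (hμprob : IsProbabilityMeasure μ)
    (S : ℕ → Ω → 𝒮) (A : ℕ → Ω → 𝒜) (Rw : ℕ → Ω → ℝ)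
    (hSm : ∀ t, Measurable (S t)) (hAm : ∀ t, Measurable (A t))
    (hRwm : ∀ t, Measurable (Rw t))
    (hinit : μ.map (S 0) = pb)
    (hdynR : ∀ (t : ℕ) (f : ℝ → ℝ), Measurable f → (∃ B, ∀ x, |f x| ≤ B) →
      μ[(fun ω => f (Rw t ω)) | histSA S A Rw t]
        =ᵐ[μ] fun ω => ∫ r, f r ∂(pr (S t ω) (A t ω)))
    (hdynS : ∀ (t : ℕ) (f : 𝒮 → ℝ), Measurable f → (∃ B, ∀ x, |f x| ≤ B) →
      μ[(fun ω => f (S (t + 1) ω)) | histFull S A Rw t]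
        =ᵐ[μ] fun ω => ∫ s', f s' ∂(ps (S t ω) (A t ω)))
    (hdynA : ∀ (t : ℕ) (g : 𝒜 → ℝ),
      μ[(fun ω => g (A t ω)) | histPreA S A Rw t]
        =ᵐ[μ] fun ω => ∑ a : 𝒜, πb (S t ω) a * g a)
    (t0 : ℝ) (ht0 : 0 < t0)
    (hgeoB : ∀ f1 f2 : Measure 𝒮, IsProbabilityMeasure f1 → IsProbabilityMeasure f2 →
      tvDist (f1.bind (stepS ps πb)) (f2.bind (stepS ps πb)) ≤
        Real.exp (-(1 / t0)) * tvDist f1 f2)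
    (hgeoE : ∀ f1 f2 : Measure 𝒮, IsProbabilityMeasure f1 → IsProbabilityMeasure f2 →
      tvDist (f1.bind (stepS ps πe)) (f2.bind (stepS ps πe)) ≤
        Real.exp (-(1 / t0)) * tvDist f1 f2)
    (pe : Measure 𝒮) (hpe : IsProbabilityMeasure pe)
    (hpeInv : pe.bind (stepS ps πe) = pe)
    (ωs : 𝒮 → ℝ) (hωsm : Measurable ωs) (hωs0 : ∀ s, 0 ≤ ωs s)
    (hωsdens : ∀ B : Set 𝒮, MeasurableSet B → pe B = ∫⁻ s in B, ENNReal.ofReal (ωs s) ∂pb)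
    :
    ∃ C : ℝ, 0 < C ∧ ∀ x : ℝ, 0 < x →
      (pb {s | x ≤ ωs s ^ (1 + 1 / (ζπ * t0))}).toReal ≤ C / x := by
  classical
  -- abbreviations
  set δ : ℝ := 1 / (ζπ * t0) with hδdef
  have hδ0 : 0 < δ := by positivity
  set p : ℝ := 1 + δ with hpdef
  have hp0 : 0 < p := by positivity
  have hp1 : (1 : ℝ) ≤ p := by simp [hpdef]; positivity
  -- kernels
  have hkE : Measurable (stepS ps πe) := measurable_stepS ps πe hpsm hπem
  have hkB : Measurable (stepS ps πb) := measurable_stepS ps πb hpsm hπbm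
  have hkEp : ∀ s, IsProbabilityMeasure (stepS ps πe s) :=
    isProb_stepS ps πe hps hπe0 hπe1
  refine ⟨(2 : ℝ) ^ p * (1 + Real.exp (1 / t0)), by positivity, ?_⟩
  intro x hx
  set y : ℝ := x ^ (1 / p) with hydef
  have hy0 : 0 < y := Real.rpow_pos_of_pos hx _
  have hyp : y ^ p = x := by
    rw [hydef, ← Real.rpow_mul hx.le, one_div, inv_mul_cancel₀ hp0.ne', Real.rpow_one]
  have hsetB : {s | x ≤ ωs s ^ p} = {s | y ≤ ωs s} := by
    ext s
    simp only [Set.mem_setOf_eq]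
    constructor
    · intro h
      have h1 : y ≤ (ωs s ^ p) ^ (1 / p) :=
        Real.rpow_le_rpow hx.le h (by positivity)
      have h2 : (ωs s ^ p) ^ (1 / p) = ωs s := by
        rw [← Real.rpow_mul (hωs0 s), mul_one_div, div_self hp0.ne', Real.rpow_one]
      rwa [h2] at h1
    · intro h
      have h1 : y ^ p ≤ ωs s ^ p := Real.rpow_le_rpow hy0.le h hp0.le
      rwa [hyp] at h1
  have hBmeas : MeasurableSet {s : 𝒮 | y ≤ ωs s} := measurableSet_le measurable_const hωsm
  rw [hsetB]
  set B : Set 𝒮 := {s | y ≤ ωs s} with hBdef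
  set b : ℝ := (pb B).toReal with hbdef
  have hb0 : 0 ≤ b := ENNReal.toReal_nonneg
  have hb1 : b ≤ 1 := by
    rw [hbdef]
    have := prob_le_one (μ := pb) (s := B)
    simpa using ENNReal.toReal_mono ENNReal.one_ne_top this
  by_cases hxc : x ≤ 2 ^ p
  · -- small x : trivial bound
    have hCx : x ≤ (2 : ℝ) ^ p * (1 + Real.exp (1 / t0)) := by
      have h1 : (1 : ℝ) ≤ 1 + Real.exp (1 / t0) := by
        have := Real.exp_nonneg (1 / t0); linarith
      calc x ≤ 2 ^ p := hxc
        _ = 2 ^ p * 1 := (mul_one _).symm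
        _ ≤ 2 ^ p * (1 + Real.exp (1 / t0)) := by
            apply mul_le_mul_of_nonneg_left h1 (by positivity)
    calc b ≤ 1 := hb1
      _ ≤ (2 : ℝ) ^ p * (1 + Real.exp (1 / t0)) / x := (one_le_div hx).2 hCx
  · -- main case : y > 2
    push_neg at hxc
    have hy2 : 2 < y := by
      have h1 : ((2 : ℝ) ^ p) ^ (1 / p) < x ^ (1 / p) :=
        Real.rpow_lt_rpow (by positivity) hxc (by positivity)
      have h2 : ((2 : ℝ) ^ p) ^ (1 / p) = 2 := by
        rw [← Real.rpow_mul (by norm_num), mul_one_div, div_self hp0.ne', Real.rpow_one]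
      rwa [h2] at h1
    have hy20 : (1 : ℝ) < y / 2 := by linarith
    set L : ℝ := Real.log (y / 2) with hLdef
    have hL0 : 0 < L := Real.log_pos hy20
    set t : ℕ := ⌊L / ζπ⌋₊ with htdef
    have ht1 : ζπ * t ≤ L := by
      have := Nat.floor_le (by positivity : (0:ℝ) ≤ L / ζπ)
      calc ζπ * t ≤ ζπ * (L / ζπ) := by
            apply mul_le_mul_of_nonneg_left this hζπ.le
        _ = L := by field_simp
    have ht2 : L < ζπ * (t + 1) := by
      have := Nat.lt_floor_add_one (L / ζπ)
      calc L = ζπ * (L / ζπ) := by field_simp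
        _ < ζπ * (t + 1) := by
            apply mul_lt_mul_of_pos_left _ hζπ
            exact_mod_cast this
    -- exp(ζ)^t ≤ y/2
    have hA : Real.exp ζπ ^ t ≤ y / 2 := by
      rw [← Real.exp_nat_mul]
      calc Real.exp (t * ζπ) ≤ Real.exp L := Real.exp_le_exp.2 (by linarith [ht1])
        _ = y / 2 := Real.exp_log (by linarith)
    -- exp(-(1/t0))^t ≤ exp(1/t0) * (y/2)^(-δ)
    have hD : Real.exp (-(1 / t0)) ^ t ≤ Real.exp (1 / t0) * (y / 2) ^ (-δ) := by
      rw [← Real.exp_nat_mul, Real.rpow_def_of_pos (by linarith : (0:ℝ) < y / 2),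
        ← Real.exp_add]
      apply Real.exp_le_exp.2
      have h1 : L / ζπ < t + 1 := by
        rw [div_lt_iff₀ hζπ]; linarith [ht2]
      have h2 : -(t : ℝ) ≤ 1 - L / ζπ := by linarith
      calc (t : ℝ) * -(1 / t0) = -(t : ℝ) * (1 / t0) := by ring
        _ ≤ (1 - L / ζπ) * (1 / t0) := by
            apply mul_le_mul_of_nonneg_right h2 (by positivity)
        _ = 1 / t0 + Real.log (y / 2) * -δ := by
            rw [← hLdef, hδdef]; field_simp; ring
    -- density lower bound : y * b ≤ (pe B).toReal
    set e : ℝ := (pe B).toReal with hedef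
    have hi1 : y * b ≤ e := by
      have hmeas : pe B ≤ 1 := prob_le_one
      have h1 : ENNReal.ofReal y * pb B ≤ pe B := by
        rw [hωsdens B hBmeas]
        calc ENNReal.ofReal y * pb B = ∫⁻ _ in B, ENNReal.ofReal y ∂pb := by
              rw [setLIntegral_const, mul_comm]
          _ ≤ ∫⁻ s in B, ENNReal.ofReal (ωs s) ∂pb := by
              apply setLIntegral_mono (hωsm.ennreal_ofReal)
              intro s hs
              exact ENNReal.ofReal_le_ofReal hs
      have h2 := ENNReal.toReal_mono (by
        exact ne_top_of_le_ne_top (by simp) hmeas) h1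
      rwa [ENNReal.toReal_mul, ENNReal.toReal_ofReal hy0.le] at h2
    -- t-step density ratio bound
    set n : ℝ := ((nstep (stepS ps πe) t pb) B).toReal with hndef
    have hi3 : n ≤ Real.exp ζπ ^ t * b := by
      have h1 := nstep_le_exp ps πb πe ζπ hCη hkE hkB pb hpbInv t B hBmeas
      have hfin : (ENNReal.ofReal (Real.exp ζπ)) ^ t * pb B ≠ ⊤ := by
        apply ENNReal.mul_ne_top
        · exact ENNReal.pow_ne_top ENNReal.ofReal_ne_top
        · exact (measure_lt_top pb B).ne
      have h2 := ENNReal.toReal_mono hfin h1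
      rwa [ENNReal.toReal_mul, ENNReal.toReal_pow,
        ENNReal.toReal_ofReal (Real.exp_nonneg _)] at h2
    -- mixing bound
    have hi2 : e - n ≤ Real.exp (-(1 / t0)) ^ t := by
      have hprobn : IsProbabilityMeasure (nstep (stepS ps πe) t pb) :=
        nstep_isProb _ hkE hkEp pb hpb t
      have h1 := abs_sub_le_tvDist (nstep (stepS ps πe) t pb) pe hprobn hpe hBmeas
      have h2 := tvDist_nstep_le ps πe t0 hkE hkEp hgeoE pb pe hpb hpe hpeInv t
      have h3 : e - n ≤ |n - e| := by
        rw [abs_sub_comm]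
        exact le_abs_self _
      exact h3.trans (h1.trans h2)
    -- combine : (y/2) * b ≤ exp(-(1/t0))^t
    have hcomb : y / 2 * b ≤ Real.exp (-(1 / t0)) ^ t := by
      have h1 : y * b ≤ y / 2 * b + Real.exp (-(1 / t0)) ^ t := by
        calc y * b ≤ e := hi1
          _ ≤ n + Real.exp (-(1 / t0)) ^ t := by linarith [hi2]
          _ ≤ Real.exp ζπ ^ t * b + Real.exp (-(1 / t0)) ^ t := by
              have := mul_le_mul_of_nonneg_right hA hb0
              linarith [hi3]
          _ ≤ y / 2 * b + Real.exp (-(1 / t0)) ^ t := by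
              have := mul_le_mul_of_nonneg_right hA hb0
              linarith
      nlinarith [hb0, hy0]
    -- final algebra
    have hb2 : b ≤ 2 * (Real.exp (1 / t0) * (y / 2) ^ (-δ)) / y := by
      rw [div_eq_mul_inv]
      have h1 : b * y ≤ 2 * (Real.exp (1 / t0) * (y / 2) ^ (-δ)) := by
        calc b * y = 2 * (y / 2 * b) := by ring
          _ ≤ 2 * Real.exp (-(1 / t0)) ^ t := by linarith [hcomb]
          _ ≤ 2 * (Real.exp (1 / t0) * (y / 2) ^ (-δ)) := by linarith [hD]
      calc b = b * y * y⁻¹ := by field_simp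
        _ ≤ 2 * (Real.exp (1 / t0) * (y / 2) ^ (-δ)) * y⁻¹ := by
            apply mul_le_mul_of_nonneg_right h1 (by positivity)
    have hkey : 2 * (Real.exp (1 / t0) * (y / 2) ^ (-δ)) / y
        = 2 ^ p * Real.exp (1 / t0) / x := by
      have h2p : (2 : ℝ) ^ p = 2 * 2 ^ δ := by
        rw [hpdef, Real.rpow_add (by norm_num : (0:ℝ) < 2), Real.rpow_one]
      have hyδ : y ^ (-δ) = x⁻¹ * y := by
        have h1 : y ^ (-δ) = y ^ (-p) * y ^ (1 : ℝ) := by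
          rw [← Real.rpow_add hy0, hpdef]; ring_nf
        rw [h1, Real.rpow_one, Real.rpow_neg hy0.le, hyp]
      have h1 : (y / 2) ^ (-δ) = y ^ (-δ) / 2 ^ (-δ) :=
        Real.div_rpow hy0.le (by norm_num) _
      have h2neg : (2 : ℝ) ^ (-δ) = (2 ^ δ)⁻¹ := Real.rpow_neg (by norm_num) δ
      have h2δ0 : (0:ℝ) < 2 ^ δ := Real.rpow_pos_of_pos (by norm_num) δ
      rw [h1, h2neg, hyδ, h2p]
      field_simp
    calc b ≤ 2 * (Real.exp (1 / t0) * (y / 2) ^ (-δ)) / y := hb2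
      _ = 2 ^ p * Real.exp (1 / t0) / x := hkey
      _ ≤ 2 ^ p * (1 + Real.exp (1 / t0)) / x := by
          gcongr
          linarith [Real.exp_nonneg (1 / t0)]
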